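/- Let (α, β) ∈ ℚ_p² have an infinite p-adic MCF, with V_n^α = C_n α - A_n, V_n^β = C_n β - B_n. Then min{ν_p(V_n^α), ν_p(V_n^β)} + min{ν_p(V_{n-1}^α), ν_p(V_{n-1}^β)} ≤ K_{n+1}, where K_n = -ν_p(C_n). -/

import Mathlib

/-- The Browkin `s`-function on `ℚ_p`: sends `α` to the truncation of its
`p`-adic expansion (digits in `(-p/2, p/2)`) to non-positive powers of `p`.
It is characterized by: `s α ∈ ℤ[1/p]`, `|s α|_∞ < p/2`, and `|α - s α|_p < 1`. -/
structure BrowkinS (p : ℕ) [Fact (Nat.Prime p)] where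
  s : ℚ_[p] → ℚ
  s_int : ∀ x, ∃ (z : ℤ) (k : ℕ), s x = (z : ℚ) / (p : ℚ) ^ k
  s_bound : ∀ x, |s x| < (p : ℚ) / 2
  s_close : ∀ x, ‖x - (s x : ℚ_[p])‖ < 1

/-- An infinite `p`-adic multidimensional continued fraction (dimension 2),
produced by the `p`-adic Jacobi–Perron algorithm: `al 0 = α`, `be 0 = β`,
`a_n = s(α_n)`, `b_n = s(β_n)`, `α_{n+1} = 1/(β_n - b_n)`,
`β_{n+1} = (α_n - a_n)/(β_n - b_n)`, and the algorithm never stops. -/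
structure PMCF (p : ℕ) [Fact (Nat.Prime p)] where
  s : ℚ_[p] → ℚ
  s_int : ∀ x, ∃ (z : ℤ) (k : ℕ), s x = (z : ℚ) / (p : ℚ) ^ k
  s_bound : ∀ x, |s x| < (p : ℚ) / 2
  s_close : ∀ x, ‖x - (s x : ℚ_[p])‖ < 1
  al : ℕ → ℚ_[p]
  be : ℕ → ℚ_[p]
  ne : ∀ n, be n - (s (be n) : ℚ_[p]) ≠ 0
  ral : ∀ n, al (n + 1) = (be n - (s (be n) : ℚ_[p]))⁻¹
  rbe : ∀ n, be (n + 1) = (al n - (s (al n) : ℚ_[p])) * (be n - (s (be n) : ℚ_[p]))⁻¹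

namespace PMCF

variable {p : ℕ} [Fact (Nat.Prime p)]

/-- Partial quotients `a_n = s(α_n)`. -/
def a (m : PMCF p) (n : ℕ) : ℚ := m.s (m.al n)

/-- Partial quotients `b_n = s(β_n)`. -/
def b (m : PMCF p) (n : ℕ) : ℚ := m.s (m.be n)

/-- Numerators `A`: indices shifted by `2`, so `A (n+2)` is the paper's `A_n`
(`A_{-2} = 0`, `A_{-1} = 1`, `A_0 = a_0`). -/
def A (m : PMCF p) : ℕ → ℚ
  | 0 => 0
  | 1 => 1
  | 2 => a m 0
  | n + 3 => a m (n + 1) * A m (n + 2) + b m (n + 1) * A m (n + 1) + A m n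

/-- Numerators `B` (shifted by `2`): `B_{-2} = 1`, `B_{-1} = 0`, `B_0 = b_0`. -/
def B (m : PMCF p) : ℕ → ℚ
  | 0 => 1
  | 1 => 0
  | 2 => b m 0
  | n + 3 => a m (n + 1) * B m (n + 2) + b m (n + 1) * B m (n + 1) + B m n

/-- Denominators `C` (shifted by `2`): `C_{-2} = 0`, `C_{-1} = 0`, `C_0 = 1`. -/
def C (m : PMCF p) : ℕ → ℚ
  | 0 => 0
  | 1 => 0
  | 2 => 1
  | n + 3 => a m (n + 1) * C m (n + 2) + b m (n + 1) * C m (n + 1) + C m n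

/-- `K_n = k_1 + ⋯ + k_n` where `k_i = ν_p(1/a_i)`. -/
def K (m : PMCF p) (n : ℕ) : ℤ := -∑ i ∈ Finset.Icc 1 n, padicValRat p (a m i)

/-- `k_n = ν_p(1/a_n)`. -/
def kk (m : PMCF p) (n : ℕ) : ℤ := -padicValRat p (a m n)

/-- `V_n^α = C_n α - A_n` (paper indexing). -/
noncomputable def Va (m : PMCF p) (n : ℕ) : ℚ_[p] :=
  ((C m (n + 2) : ℚ) : ℚ_[p]) * m.al 0 - ((A m (n + 2) : ℚ) : ℚ_[p])

/-- `V_n^β = C_n β - B_n` (paper indexing). -/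
noncomputable def Vb (m : PMCF p) (n : ℕ) : ℚ_[p] :=
  ((C m (n + 2) : ℚ) : ℚ_[p]) * m.be 0 - ((B m (n + 2) : ℚ) : ℚ_[p])

end PMCF

namespace PMCF
variable {p : ℕ} [Fact (Nat.Prime p)]

noncomputable def Pa (m : PMCF p) : ℕ → ℚ_[p]
  | 0 => 1
  | n + 1 => Pa m n * m.al (n + 1)

lemma Pa_succ (m : PMCF p) (n : ℕ) : m.Pa (n + 1) = m.Pa n * m.al (n + 1) := rfl

lemma ne' (m : PMCF p) (n : ℕ) : m.be n - ((b m n : ℚ) : ℚ_[p]) ≠ 0 := m.ne n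

lemma ral' (m : PMCF p) (n : ℕ) : m.al (n + 1) = (m.be n - ((b m n : ℚ) : ℚ_[p]))⁻¹ := m.ral n

lemma rbe' (m : PMCF p) (n : ℕ) :
    m.be (n + 1) = (m.al n - ((a m n : ℚ) : ℚ_[p])) * m.al (n + 1) := by
  rw [m.rbe n, m.ral n]; rfl

lemma al_succ_ne (m : PMCF p) (n : ℕ) : m.al (n + 1) ≠ 0 := by
  rw [m.ral']; exact inv_ne_zero (m.ne' n)

lemma hinv (m : PMCF p) (n : ℕ) :
    m.al (n + 1) * (m.be n - ((b m n : ℚ) : ℚ_[p])) = 1 := by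
  rw [m.ral']; exact inv_mul_cancel₀ (m.ne' n)

lemma Pa_ne (m : PMCF p) : ∀ n, m.Pa n ≠ 0
  | 0 => one_ne_zero
  | n + 1 => mul_ne_zero (Pa_ne m n) (m.al_succ_ne n)

lemma triple (m : PMCF p) (n : ℕ) :
    ((A m (n+2) : ℚ) : ℚ_[p]) * m.al (n+1) + ((A m (n+1) : ℚ) : ℚ_[p]) * m.be (n+1)
        + ((A m n : ℚ) : ℚ_[p]) = m.Pa (n+1) * m.al 0
  ∧ ((B m (n+2) : ℚ) : ℚ_[p]) * m.al (n+1) + ((B m (n+1) : ℚ) : ℚ_[p]) * m.be (n+1)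
        + ((B m n : ℚ) : ℚ_[p]) = m.Pa (n+1) * m.be 0
  ∧ ((C m (n+2) : ℚ) : ℚ_[p]) * m.al (n+1) + ((C m (n+1) : ℚ) : ℚ_[p]) * m.be (n+1)
        + ((C m n : ℚ) : ℚ_[p]) = m.Pa (n+1) := by
  induction n with
  | zero =>
    rw [m.rbe' 0]
    refine ⟨?_, ?_, ?_⟩
    · show ((a m 0 : ℚ) : ℚ_[p]) * m.al 1 + ((1 : ℚ) : ℚ_[p]) * _ + ((0:ℚ):ℚ_[p])
        = m.Pa 0 * m.al 1 * m.al 0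
      push_cast
      show _ = 1 * m.al 1 * m.al 0
      ring
    · show ((b m 0 : ℚ) : ℚ_[p]) * m.al 1 + ((0 : ℚ) : ℚ_[p]) * _ + ((1:ℚ):ℚ_[p])
        = m.Pa 0 * m.al 1 * m.be 0
      push_cast
      show _ = 1 * m.al 1 * m.be 0
      linear_combination (-1 : ℚ_[p]) * m.hinv 0
    · show ((1 : ℚ) : ℚ_[p]) * m.al 1 + ((0 : ℚ) : ℚ_[p]) * _ + ((0:ℚ):ℚ_[p])
        = m.Pa 0 * m.al 1
      push_cast
      show _ = 1 * m.al 1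
      ring
  | succ n ih =>
    obtain ⟨ihA, ihB, ihC⟩ := ih
    have eA : A m (n+1+2) = a m (n + 1) * A m (n + 2) + b m (n + 1) * A m (n + 1) + A m n := rfl
    have eB : B m (n+1+2) = a m (n + 1) * B m (n + 2) + b m (n + 1) * B m (n + 1) + B m n := rfl
    have eC : C m (n+1+2) = a m (n + 1) * C m (n + 2) + b m (n + 1) * C m (n + 1) + C m n := rfl
    rw [eA, eB, eC, m.rbe' (n+1), Pa_succ]
    refine ⟨?_, ?_, ?_⟩
    · push_cast
      linear_combination m.al (n+2) * ihA - ((A m (n+1) : ℚ) : ℚ_[p]) * m.hinv (n+1)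
    · push_cast
      linear_combination m.al (n+2) * ihB - ((B m (n+1) : ℚ) : ℚ_[p]) * m.hinv (n+1)
    · push_cast
      linear_combination m.al (n+2) * ihC - ((C m (n+1) : ℚ) : ℚ_[p]) * m.hinv (n+1)

lemma det_eq_one (m : PMCF p) : ∀ n : ℕ,
    A m (n+2) * (B m (n+1) * C m n - C m (n+1) * B m n)
      - B m (n+2) * (A m (n+1) * C m n - C m (n+1) * A m n)
      + C m (n+2) * (A m (n+1) * B m n - B m (n+1) * A m n) = 1
  | 0 => by simp [A, B, C]
  | n + 1 => by
    have eA : A m (n+1+2) = a m (n + 1) * A m (n + 2) + b m (n + 1) * A m (n + 1) + A m n := rfl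
    have eB : B m (n+1+2) = a m (n + 1) * B m (n + 2) + b m (n + 1) * B m (n + 1) + B m n := rfl
    have eC : C m (n+1+2) = a m (n + 1) * C m (n + 2) + b m (n + 1) * C m (n + 1) + C m n := rfl
    rw [eA, eB, eC]
    linear_combination det_eq_one m n

lemma key (m : PMCF p) (n : ℕ) :
    Va m (n+1) * Vb m n - Vb m (n+1) * Va m n = (m.Pa (n+2))⁻¹ := by
  obtain ⟨ha, hb, hc⟩ := m.triple (n+1)
  have hD := m.det_eq_one (n+1)
  have hD' := congrArg (fun q : ℚ => (q : ℚ_[p])) hD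
  push_cast at hD'
  have hmul : (Va m (n+1) * Vb m n - Vb m (n+1) * Va m n) * m.Pa (n+2) = 1 := by
    simp only [Va, Vb]
    linear_combination hD'
      - (((B m (n+1+2):ℚ):ℚ_[p]) * ((C m (n+2):ℚ):ℚ_[p]) - ((C m (n+1+2):ℚ):ℚ_[p]) * ((B m (n+2):ℚ):ℚ_[p])) * ha
      - (((C m (n+1+2):ℚ):ℚ_[p]) * ((A m (n+2):ℚ):ℚ_[p]) - ((A m (n+1+2):ℚ):ℚ_[p]) * ((C m (n+2):ℚ):ℚ_[p])) * hb
      - (((A m (n+1+2):ℚ):ℚ_[p]) * ((B m (n+2):ℚ):ℚ_[p]) - ((B m (n+1+2):ℚ):ℚ_[p]) * ((A m (n+2):ℚ):ℚ_[p])) * hc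
  rw [mul_comm] at hmul
  exact eq_inv_of_mul_eq_one_right hmul

lemma norm_eq_of_sub_lt {x y : ℚ_[p]} (h : ‖x - y‖ < ‖x‖) : ‖y‖ = ‖x‖ := by
  have e1 : x + (y - x) = y := by ring
  have e2 : y + (x - y) = x := by ring
  apply le_antisymm
  · have h3 := Padic.nonarchimedean x (y - x)
    rw [e1] at h3
    refine h3.trans (max_le le_rfl ?_)
    rw [norm_sub_rev]; exact h.le
  · have h3 := Padic.nonarchimedean y (x - y)
    rw [e2] at h3
    rcases max_cases ‖y‖ ‖x - y‖ with ⟨hm, _⟩ | ⟨hm, _⟩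
    · rw [hm] at h3; exact h3
    · rw [hm] at h3; exact absurd (h3.trans_lt h) (lt_irrefl _)

lemma one_lt_norm_al (m : PMCF p) (n : ℕ) : 1 < ‖m.al (n + 1)‖ := by
  rw [m.ral', norm_inv]
  have h0 : 0 < ‖m.be n - ((b m n : ℚ) : ℚ_[p])‖ := norm_pos_iff.mpr (m.ne' n)
  have h1 : ‖m.be n - ((b m n : ℚ) : ℚ_[p])‖ < 1 := m.s_close (m.be n)
  exact (one_lt_inv₀ h0).mpr h1

lemma norm_a_eq (m : PMCF p) (n : ℕ) : ‖((a m (n + 1) : ℚ) : ℚ_[p])‖ = ‖m.al (n + 1)‖ :=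
  norm_eq_of_sub_lt ((m.s_close (m.al (n + 1))).trans_le (m.one_lt_norm_al n).le)

lemma a_ne_zero (m : PMCF p) (n : ℕ) : a m (n + 1) ≠ 0 := by
  intro h
  have h1 := m.one_lt_norm_al n
  rw [← m.norm_a_eq n, h] at h1
  simp at h1
  linarith

lemma norm_a_zpow (m : PMCF p) (n : ℕ) :
    ‖((a m (n + 1) : ℚ) : ℚ_[p])‖ = (p : ℝ) ^ (-padicValRat p (a m (n + 1))) := by
  rw [Padic.eq_padicNorm, padicNorm.eq_zpow_of_nonzero (m.a_ne_zero n)]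
  push_cast
  ring

lemma norm_Pa (m : PMCF p) : ∀ k, ‖m.Pa k‖ = (p : ℝ) ^ (K m k)
  | 0 => by simp [Pa, K]
  | k + 1 => by
    have hp0 : (p : ℝ) ≠ 0 := Nat.cast_ne_zero.mpr (Nat.Prime.ne_zero Fact.out)
    rw [Pa_succ, norm_mul, norm_Pa m k, ← m.norm_a_eq k, m.norm_a_zpow k, ← zpow_add₀ hp0]
    congr 1
    show K m k + -padicValRat p (a m (k + 1)) = K m (k + 1)
    simp only [K]
    rw [Finset.sum_Icc_succ_top (by omega : 1 ≤ k + 1)]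
    ring

end PMCF


/-- Upper bound: `min{ν_p(V_n^α), ν_p(V_n^β)} + min{ν_p(V_{n-1}^α), ν_p(V_{n-1}^β)} ≤ K_{n+1}`
(stated with `n` replaced by `n + 1` and via the `p`-adic norm:
`p^{-K_{n+2}} ≤ max{|V_{n+1}^α|, |V_{n+1}^β|} ⋅ max{|V_n^α|, |V_n^β|}`). -/
theorem pmcf_V_valuation_upper_bound (p : ℕ) [Fact (Nat.Prime p)] (hp : Odd p)
    (m : PMCF p) (n : ℕ) :
    (p : ℝ) ^ (-(PMCF.K m (n + 2))) ≤
      max ‖PMCF.Va m (n + 1)‖ ‖PMCF.Vb m (n + 1)‖ * max ‖PMCF.Va m n‖ ‖PMCF.Vb m n‖ := by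
  have h1 : (p : ℝ) ^ (-(PMCF.K m (n + 2)))
      = ‖PMCF.Va m (n + 1) * PMCF.Vb m n - PMCF.Vb m (n + 1) * PMCF.Va m n‖ := by
    rw [PMCF.key m n, norm_inv, PMCF.norm_Pa m (n + 2), ← zpow_neg]
  rw [h1]
  have h2 : ‖PMCF.Va m (n + 1) * PMCF.Vb m n - PMCF.Vb m (n + 1) * PMCF.Va m n‖
      ≤ max (‖PMCF.Va m (n + 1)‖ * ‖PMCF.Vb m n‖) (‖PMCF.Vb m (n + 1)‖ * ‖PMCF.Va m n‖) := by
    have h3 := Padic.nonarchimedean (PMCF.Va m (n + 1) * PMCF.Vb m n)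
      (-(PMCF.Vb m (n + 1) * PMCF.Va m n))
    rw [← sub_eq_add_neg] at h3
    simpa [norm_mul] using h3
  refine h2.trans (max_le ?_ ?_)
  · exact mul_le_mul (le_max_left _ _) (le_max_right _ _) (norm_nonneg _)
      ((norm_nonneg _).trans (le_max_left _ _))
  · exact mul_le_mul (le_max_right _ _) (le_max_left _ _) (norm_nonneg _)
      ((norm_nonneg _).trans (le_max_left _ _))
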